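/- Let Q = {x ∈ ℝⁿ : Ax ≤ b} be a nonempty polyhedron, z ∈ vrt(Q), ε ≥ 0, and set T = N(z). Let ψ : ℝⁿ → (−∞, ∞] be proper convex. For any w ∈ ∂(εψ)(z) ∩ T, γ(T ∩ [T + ∂(εψ)(z)]) ≥ γ(T) · exp(−½‖w‖² − ‖w‖√n). Moreover, if ψ is differentiable at z, then γ(T ∩ [T + ε∇ψ(z)]) ≤ γ(T) · exp(−½‖proj_{T*}(ε∇ψ(z))‖² + dist(ε∇ψ(z), T*)·√n). -/

import Mathlib

open MeasureTheory Set Metric Pointwise RealInnerProductSpace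

noncomputable section

/-- Normal cone of a convex set `Q` at a point `z`. -/
def normalCone {n : ℕ} (Q : Set (EuclideanSpace ℝ (Fin n))) (z : EuclideanSpace ℝ (Fin n)) :
    Set (EuclideanSpace ℝ (Fin n)) :=
  {v | ∀ y ∈ Q, ⟪v, y - z⟫ ≤ 0}

/-- Standard Gaussian measure of a set in `ℝⁿ`. -/
def gauss {n : ℕ} (B : Set (EuclideanSpace ℝ (Fin n))) : ℝ :=
  ∫ x in B, (2 * Real.pi) ^ (-(n : ℝ) / 2) * Real.exp (-‖x‖ ^ 2 / 2)

/-- Dual cone of a set. -/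
def dualCone {n : ℕ} (V : Set (EuclideanSpace ℝ (Fin n))) : Set (EuclideanSpace ℝ (Fin n)) :=
  {y | ∀ x ∈ V, 0 ≤ ⟪x, y⟫}

/-- Subdifferential at `z` of the proper convex function equal to `ψ` on `D` and `+∞` off `D`. -/
def subdiff {n : ℕ} (D : Set (EuclideanSpace ℝ (Fin n))) (ψ : EuclideanSpace ℝ (Fin n) → ℝ)
    (z : EuclideanSpace ℝ (Fin n)) : Set (EuclideanSpace ℝ (Fin n)) :=
  {w | z ∈ D ∧ ∀ y ∈ D, ψ z + ⟪w, y - z⟫ ≤ ψ y}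

/-- `∂(εψ)(z)`: equals `ε ∂ψ(z)` for `ε > 0` and the normal cone of `dom ψ = D` at `z`
for `ε = 0`. -/
def subdiffScaled {n : ℕ} (ε : ℝ) (D : Set (EuclideanSpace ℝ (Fin n)))
    (ψ : EuclideanSpace ℝ (Fin n) → ℝ) (z : EuclideanSpace ℝ (Fin n)) :
    Set (EuclideanSpace ℝ (Fin n)) :=
  if ε = 0 then {w | z ∈ D ∧ ∀ y ∈ D, ⟪w, y - z⟫ ≤ 0}
  else (fun w => ε • w) '' subdiff D ψ z

section aux

variable {n : ℕ}

lemma aux_integrable {b : ℝ} (hb : 0 < b) :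
    Integrable (fun x : EuclideanSpace ℝ (Fin n) => Real.exp (-(b * ‖x‖ ^ 2) / 2)) := by
  have h := (GaussianFourier.integrable_cexp_neg_mul_sq_norm_add
      (V := EuclideanSpace ℝ (Fin n)) (b := ((b / 2 : ℝ) : ℂ))
      (by simpa using by positivity) 0 0).norm
  refine h.congr (Filter.Eventually.of_forall fun v => ?_)
  show ‖Complex.exp _‖ = _
  rw [Complex.norm_exp]
  congr 1
  simp [Complex.add_re, Complex.mul_re, ← Complex.ofReal_pow]
  ring

lemma aux_cone_scale {T : Set (EuclideanSpace ℝ (Fin n))} (hT : MeasurableSet T)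
    (hc : ∀ t : ℝ, 0 < t → ∀ x ∈ T, t • x ∈ T) {k : ℝ} (b : ℝ) (hk : 0 < k) :
    ∫ x in T, Real.exp (-(k ^ 2 * b * ‖x‖ ^ 2) / 2)
      = (k ^ n)⁻¹ * ∫ x in T, Real.exp (-(b * ‖x‖ ^ 2) / 2) := by
  have hmem : ∀ x : EuclideanSpace ℝ (Fin n), k • x ∈ T ↔ x ∈ T := by
    intro x
    constructor
    · intro h
      have := hc k⁻¹ (by positivity) _ h
      rwa [smul_smul, inv_mul_cancel₀ hk.ne', one_smul] at this
    · exact hc k hk x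
  have key : ∀ x : EuclideanSpace ℝ (Fin n),
      T.indicator (fun y => Real.exp (-(b * ‖y‖ ^ 2) / 2)) (k • x)
        = T.indicator (fun y => Real.exp (-(k ^ 2 * b * ‖y‖ ^ 2) / 2)) x := by
    intro x
    by_cases hx : x ∈ T
    · rw [indicator_of_mem ((hmem x).2 hx), indicator_of_mem hx, norm_smul]
      congr 1
      rw [Real.norm_eq_abs, mul_pow, sq_abs]
      ring
    · rw [indicator_of_notMem (fun h => hx ((hmem x).1 h)), indicator_of_notMem hx]
  rw [← integral_indicator hT, ← integral_indicator hT]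
  have : ∫ x, T.indicator (fun y => Real.exp (-(k ^ 2 * b * ‖y‖ ^ 2) / 2)) x
      = ∫ x, T.indicator (fun y => Real.exp (-(b * ‖y‖ ^ 2) / 2)) (k • x) := by
    simp_rw [key]
  rw [this, MeasureTheory.Measure.integral_comp_smul volume _ k, finrank_euclideanSpace_fin,
    smul_eq_mul, abs_of_nonneg (inv_nonneg.2 (pow_nonneg hk.le _))]

lemma aux_core1 (hn : 0 < n) {T : Set (EuclideanSpace ℝ (Fin n))} (hT : MeasurableSet T)
    (hc : ∀ t : ℝ, 0 < t → ∀ x ∈ T, t • x ∈ T)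
    (w : EuclideanSpace ℝ (Fin n)) :
    Real.exp (-‖w‖ ^ 2 / 2 - ‖w‖ * Real.sqrt n) * ∫ x in T, Real.exp (-(1 * ‖x‖ ^ 2) / 2)
      ≤ ∫ y in T, Real.exp (-‖y + w‖ ^ 2 / 2) := by
  set s := ‖w‖ with hs_def
  have hs0 : 0 ≤ s := norm_nonneg w
  set rn := Real.sqrt n with hrn_def
  have hrn : 0 < rn := Real.sqrt_pos.2 (by exact_mod_cast hn)
  have hrn2 : rn ^ 2 = n := Real.sq_sqrt (Nat.cast_nonneg n)
  set σ := s / rn with hσ_def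
  have hσ0 : 0 ≤ σ := div_nonneg hs0 hrn.le
  have hs_eq : s = σ * rn := by rw [hσ_def, div_mul_cancel₀ s hrn.ne']
  set k := Real.sqrt (1 + σ) with hk_def
  have hk : 0 < k := Real.sqrt_pos.2 (by linarith)
  have hk2 : k ^ 2 = 1 + σ := Real.sq_sqrt (by linarith)
  have hpt : ∀ y : EuclideanSpace ℝ (Fin n),
      Real.exp (-s ^ 2 / 2 - s * rn / 2) * Real.exp (-(k ^ 2 * 1 * ‖y‖ ^ 2) / 2)
        ≤ Real.exp (-‖y + w‖ ^ 2 / 2) := by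
    intro y
    rw [← Real.exp_add, Real.exp_le_exp]
    have hexp : ‖y + w‖ ^ 2 = ‖y‖ ^ 2 + 2 * ⟪y, w⟫ + s ^ 2 := norm_add_sq_real y w
    have hcs : ⟪y, w⟫ ≤ ‖y‖ * s := real_inner_le_norm y w
    have htan : s * ‖y‖ ≤ s * rn / 2 + σ * ‖y‖ ^ 2 / 2 := by
      nlinarith [mul_nonneg hσ0 (sq_nonneg (‖y‖ - rn)), sq_nonneg (‖y‖ - rn)]
    nlinarith [htan, hcs, hexp, hk2]
  have hint1 : Integrable (fun y : EuclideanSpace ℝ (Fin n) => Real.exp (-‖y + w‖ ^ 2 / 2)) := by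
    have h1 : Integrable (fun x : EuclideanSpace ℝ (Fin n) => Real.exp (-‖x‖ ^ 2 / 2)) := by
      simpa using aux_integrable (n := n) one_pos
    have hmp := measurePreserving_add_right
      (volume : Measure (EuclideanSpace ℝ (Fin n))) w
    exact (hmp.integrable_comp_emb (MeasurableEquiv.addRight w).measurableEmbedding).2 h1
  have hint2 : Integrable (fun y : EuclideanSpace ℝ (Fin n) =>
      Real.exp (-s ^ 2 / 2 - s * rn / 2) * Real.exp (-(k ^ 2 * 1 * ‖y‖ ^ 2) / 2)) :=
    (aux_integrable (by positivity)).const_mul _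
  have hmono := setIntegral_mono_on hint2.integrableOn hint1.integrableOn hT (fun y _ => hpt y)
  rw [integral_const_mul, aux_cone_scale hT hc 1 hk] at hmono
  refine le_trans ?_ hmono
  have hI : 0 ≤ ∫ x in T, Real.exp (-(1 * ‖x‖ ^ 2) / 2) :=
    integral_nonneg fun x => Real.exp_nonneg _
  have hsc : Real.exp (-s ^ 2 / 2 - s * rn) ≤ Real.exp (-s ^ 2 / 2 - s * rn / 2) * (k ^ n)⁻¹ := by
    have hkn : k ^ n ≤ Real.exp (s * rn / 2) := by
      have h1 : k ≤ Real.exp (σ / 2) := by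
        have h2 : Real.sqrt (Real.exp σ) = Real.exp (σ / 2) := by
          rw [show Real.exp σ = Real.exp (σ / 2) ^ 2 by
            rw [sq, ← Real.exp_add]; ring_nf, Real.sqrt_sq (Real.exp_nonneg _)]
        rw [hk_def, ← h2]
        exact Real.sqrt_le_sqrt (by linarith [Real.add_one_le_exp σ])
      calc k ^ n ≤ Real.exp (σ / 2) ^ n := pow_le_pow_left₀ (Real.sqrt_nonneg _) h1 n
        _ = Real.exp (n * (σ / 2)) := (Real.exp_nat_mul _ n).symm
        _ = Real.exp (s * rn / 2) := by
            congr 1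
            have : (n : ℝ) = rn * rn := by rw [← hrn2]; ring
            rw [this, hs_eq]; ring
    calc Real.exp (-s ^ 2 / 2 - s * rn)
        = Real.exp (-s ^ 2 / 2 - s * rn / 2) * Real.exp (-(s * rn / 2)) := by
          rw [← Real.exp_add]; ring_nf
      _ ≤ Real.exp (-s ^ 2 / 2 - s * rn / 2) * (k ^ n)⁻¹ := by
          apply mul_le_mul_of_nonneg_left _ (Real.exp_nonneg _)
          rw [Real.exp_neg]
          exact inv_anti₀ (by positivity) hkn
  have hw2 : -‖w‖ ^ 2 / 2 - ‖w‖ * rn = -s ^ 2 / 2 - s * rn := rfl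
  rw [hw2]
  calc Real.exp (-s ^ 2 / 2 - s * rn) * ∫ x in T, Real.exp (-(1 * ‖x‖ ^ 2) / 2)
      ≤ (Real.exp (-s ^ 2 / 2 - s * rn / 2) * (k ^ n)⁻¹)
          * ∫ x in T, Real.exp (-(1 * ‖x‖ ^ 2) / 2) :=
        mul_le_mul_of_nonneg_right hsc hI
    _ = Real.exp (-s ^ 2 / 2 - s * rn / 2)
          * ((k ^ n)⁻¹ * ∫ x in T, Real.exp (-(1 * ‖x‖ ^ 2) / 2)) := by
        ring

set_option maxHeartbeats 1000000 in
lemma aux_core2 (hn : 0 < n) {T : Set (EuclideanSpace ℝ (Fin n))} (hT : MeasurableSet T)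
    (hc : ∀ t : ℝ, 0 < t → ∀ x ∈ T, t • x ∈ T)
    (u p : EuclideanSpace ℝ (Fin n))
    (hp : ∀ y ∈ T, 0 ≤ ⟪y, p⟫) (horth : ⟪p, u - p⟫ = 0) :
    ∫ y in T ∩ ((· + u) ⁻¹' T), Real.exp (-‖y + u‖ ^ 2 / 2)
      ≤ Real.exp (-‖p‖ ^ 2 / 2 + ‖u - p‖ * Real.sqrt n)
          * ∫ x in T, Real.exp (-(1 * ‖x‖ ^ 2) / 2) := by
  set d := ‖u - p‖ with hd_def
  have hd0 : 0 ≤ d := norm_nonneg _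
  set rn := Real.sqrt n with hrn_def
  have hrn : 0 < rn := Real.sqrt_pos.2 (by exact_mod_cast hn)
  have hrn2 : rn ^ 2 = n := Real.sq_sqrt (Nat.cast_nonneg n)
  set k := Real.sqrt (rn / (rn + d)) with hk_def
  have hk : 0 < k := Real.sqrt_pos.2 (by positivity)
  have hk2 : k ^ 2 = rn / (rn + d) := Real.sq_sqrt (by positivity)
  have hu2 : ‖u‖ ^ 2 = ‖p‖ ^ 2 + d ^ 2 := by
    have := norm_add_sq_real p (u - p)
    rw [horth] at this
    simpa [add_sub_cancel] using this
  have hpt : ∀ y ∈ T ∩ ((· + u) ⁻¹' T),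
      Real.exp (-‖y + u‖ ^ 2 / 2)
        ≤ Real.exp (-‖p‖ ^ 2 / 2 - d ^ 2 / 2 + d * (rn + d) / 2)
            * Real.exp (-(k ^ 2 * 1 * ‖y‖ ^ 2) / 2) := by
    rintro y ⟨hyT, -⟩
    rw [← Real.exp_add, Real.exp_le_exp]
    have hexp : ‖y + u‖ ^ 2 = ‖y‖ ^ 2 + 2 * ⟪y, u⟫ + ‖u‖ ^ 2 := norm_add_sq_real y u
    have hyu : ⟪y, u⟫ = ⟪y, p⟫ + ⟪y, u - p⟫ := by
      rw [← inner_add_right]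
      congr 1
      abel
    have h1 : 0 ≤ ⟪y, p⟫ := hp y hyT
    have h2 : -(‖y‖ * d) ≤ ⟪y, u - p⟫ := by
      have := abs_real_inner_le_norm y (u - p)
      rw [abs_le] at this
      exact this.1
    have htan : d * ‖y‖ ≤ d * (rn + d) / 2 + (d / (rn + d)) * ‖y‖ ^ 2 / 2 := by
      have hpos : 0 < rn + d := by positivity
      have := mul_nonneg (div_nonneg hd0 hpos.le) (sq_nonneg (‖y‖ - (rn + d)))
      have hexpand : (d / (rn + d)) * (‖y‖ - (rn + d)) ^ 2
          = (d / (rn + d)) * ‖y‖ ^ 2 - 2 * (d * ‖y‖) + d * (rn + d) := by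
        field_simp
        ring
      nlinarith [this, hexpand]
    have hk2' : k ^ 2 = 1 - d / (rn + d) := by
      rw [hk2]
      field_simp
      ring
    nlinarith [hexp, hyu, h1, h2, htan, hk2', sq_nonneg (‖y‖)]
  have hmeas : MeasurableSet (T ∩ ((· + u) ⁻¹' T)) :=
    hT.inter (hT.preimage (measurable_id.add_const u))
  have hint1 : Integrable (fun y : EuclideanSpace ℝ (Fin n) => Real.exp (-‖y + u‖ ^ 2 / 2)) := by
    have h1 : Integrable (fun x : EuclideanSpace ℝ (Fin n) => Real.exp (-‖x‖ ^ 2 / 2)) := by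
      simpa using aux_integrable (n := n) one_pos
    have hmp := measurePreserving_add_right (volume : Measure (EuclideanSpace ℝ (Fin n))) u
    exact (hmp.integrable_comp_emb (MeasurableEquiv.addRight u).measurableEmbedding).2 h1
  have hint2 : Integrable (fun y : EuclideanSpace ℝ (Fin n) =>
      Real.exp (-‖p‖ ^ 2 / 2 - d ^ 2 / 2 + d * (rn + d) / 2)
        * Real.exp (-(k ^ 2 * 1 * ‖y‖ ^ 2) / 2)) :=
    (aux_integrable (by positivity)).const_mul _
  have step1 := setIntegral_mono_on hint1.integrableOn hint2.integrableOn hmeas hpt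
  have step2 : (∫ y in T ∩ ((· + u) ⁻¹' T),
        Real.exp (-‖p‖ ^ 2 / 2 - d ^ 2 / 2 + d * (rn + d) / 2)
          * Real.exp (-(k ^ 2 * 1 * ‖y‖ ^ 2) / 2))
      ≤ ∫ y in T, Real.exp (-‖p‖ ^ 2 / 2 - d ^ 2 / 2 + d * (rn + d) / 2)
          * Real.exp (-(k ^ 2 * 1 * ‖y‖ ^ 2) / 2) := by
    apply setIntegral_mono_set hint2.integrableOn
      (Filter.Eventually.of_forall fun y => by positivity)
      (HasSubset.Subset.eventuallyLE inter_subset_left)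
  refine le_trans (le_trans step1 step2) ?_
  rw [integral_const_mul, aux_cone_scale hT hc 1 hk]
  have hI : 0 ≤ ∫ x in T, Real.exp (-(1 * ‖x‖ ^ 2) / 2) :=
    integral_nonneg fun x => Real.exp_nonneg _
  rw [← mul_assoc]
  apply mul_le_mul_of_nonneg_right _ hI
  have hkn : (k ^ n)⁻¹ ≤ Real.exp (d * rn / 2) := by
    set K := Real.sqrt (1 + d / rn) with hK_def
    have hK0 : 0 ≤ K := Real.sqrt_nonneg _
    have hkK : k * K = 1 := by
      have h1 : (k * K) ^ 2 = 1 := by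
        rw [mul_pow, hk2, hK_def, Real.sq_sqrt (by positivity)]
        field_simp
      have h2 : 0 ≤ k * K := mul_nonneg hk.le hK0
      have hle : k * K ≤ 1 := by nlinarith [h1, h2]
      have hge : 1 ≤ k * K := by nlinarith [h1, h2]
      linarith
    have hkinv : (k ^ n)⁻¹ = K ^ n := by
      have hKk : K = k⁻¹ := eq_inv_of_mul_eq_one_right hkK
      rw [hKk, inv_pow]
    rw [hkinv]
    have h1 : K ≤ Real.exp (d / rn / 2) := by
      have h2 : Real.sqrt (Real.exp (d / rn)) = Real.exp (d / rn / 2) := by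
        rw [show Real.exp (d / rn) = Real.exp (d / rn / 2) ^ 2 by
          rw [sq, ← Real.exp_add]; ring_nf, Real.sqrt_sq (Real.exp_nonneg _)]
      rw [hK_def, ← h2]
      exact Real.sqrt_le_sqrt (by linarith [Real.add_one_le_exp (d / rn)])
    calc K ^ n ≤ Real.exp (d / rn / 2) ^ n := pow_le_pow_left₀ hK0 h1 n
      _ = Real.exp (n * (d / rn / 2)) := (Real.exp_nat_mul _ n).symm
      _ = Real.exp (d * rn / 2) := by
          congr 1
          have : (n : ℝ) = rn * rn := by rw [← hrn2]; ring
          rw [this]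
          field_simp
  calc Real.exp (-‖p‖ ^ 2 / 2 - d ^ 2 / 2 + d * (rn + d) / 2) * (k ^ n)⁻¹
      ≤ Real.exp (-‖p‖ ^ 2 / 2 - d ^ 2 / 2 + d * (rn + d) / 2) * Real.exp (d * rn / 2) :=
        mul_le_mul_of_nonneg_left hkn (Real.exp_nonneg _)
    _ = Real.exp (-‖p‖ ^ 2 / 2 + d * rn) := by
        rw [← Real.exp_add]
        congr 1
        ring

end aux

/-- Gaussian measure of an inner cone under the membership condition. -/
theorem stmt7 {n m : ℕ} (A : Fin m → EuclideanSpace ℝ (Fin n)) (b : Fin m → ℝ)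
    (Q : Set (EuclideanSpace ℝ (Fin n)))
    (hQ : Q = {x | ∀ i, ⟪A i, x⟫ ≤ b i}) (hne : Q.Nonempty)
    (z : EuclideanSpace ℝ (Fin n)) (hz : z ∈ Set.extremePoints ℝ Q)
    (D : Set (EuclideanSpace ℝ (Fin n))) (ψ : EuclideanSpace ℝ (Fin n) → ℝ)
    (hDne : D.Nonempty) (hψ : ConvexOn ℝ D ψ)
    (ε : ℝ) (hε : 0 ≤ ε) :
    (∀ w ∈ subdiffScaled ε D ψ z ∩ normalCone Q z,
      gauss (normalCone Q z) * Real.exp (-‖w‖ ^ 2 / 2 - ‖w‖ * Real.sqrt n) ≤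
        gauss (normalCone Q z ∩ (normalCone Q z + subdiffScaled ε D ψ z))) ∧
    (∀ v : EuclideanSpace ℝ (Fin n), HasGradientAt ψ v z →
      ∀ p : EuclideanSpace ℝ (Fin n), p ∈ dualCone (normalCone Q z) →
        (∀ a ∈ dualCone (normalCone Q z), dist (ε • v) p ≤ dist (ε • v) a) →
      gauss (normalCone Q z ∩ ((· + ε • v) '' normalCone Q z)) ≤
        gauss (normalCone Q z) *
          Real.exp (-‖p‖ ^ 2 / 2 +
            infDist (ε • v) (dualCone (normalCone Q z)) * Real.sqrt n)) := by
  set T := normalCone Q z with hT_def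
  have hTclosed : IsClosed T := by
    have hrw : T = ⋂ y ∈ Q, {v : EuclideanSpace ℝ (Fin n) | ⟪v, y - z⟫ ≤ 0} := by
      ext v
      simp [hT_def, normalCone, Set.mem_iInter]
    rw [hrw]
    exact isClosed_biInter fun y _ =>
      isClosed_le (Continuous.inner continuous_id continuous_const) continuous_const
  have hTmeas : MeasurableSet T := hTclosed.measurableSet
  have hTadd : ∀ x ∈ T, ∀ w ∈ T, x + w ∈ T := by
    intro x hx w hw y hy
    have h1 := hx y hy
    have h2 := hw y hy
    rw [show ⟪x + w, y - z⟫ = ⟪x, y - z⟫ + ⟪w, y - z⟫ from inner_add_left _ _ _]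
    linarith
  have hTsmul : ∀ t : ℝ, 0 < t → ∀ x ∈ T, t • x ∈ T := by
    intro t ht x hx y hy
    rw [real_inner_smul_left]
    exact mul_nonpos_of_nonneg_of_nonpos ht.le (hx y hy)
  have gauss_eq : ∀ B : Set (EuclideanSpace ℝ (Fin n)),
      gauss B = (2 * Real.pi) ^ (-(n : ℝ) / 2) * ∫ x in B, Real.exp (-‖x‖ ^ 2 / 2) :=
    fun B => integral_const_mul _ _
  have hc_pos : (0 : ℝ) < (2 * Real.pi) ^ (-(n : ℝ) / 2) :=
    Real.rpow_pos_of_pos (by positivity) _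
  have hint_one : Integrable (fun x : EuclideanSpace ℝ (Fin n) => Real.exp (-‖x‖ ^ 2 / 2)) := by
    simpa using aux_integrable (n := n) one_pos
  have hone_eq : ∀ B : Set (EuclideanSpace ℝ (Fin n)),
      (∫ x in B, Real.exp (-‖x‖ ^ 2 / 2)) = ∫ x in B, Real.exp (-(1 * ‖x‖ ^ 2) / 2) := by
    intro B
    simp only [one_mul]
  constructor
  · rintro w ⟨hwS, hwT⟩
    rcases Nat.eq_zero_or_pos n with hn | hn
    · subst hn
      haveI : Subsingleton (EuclideanSpace ℝ (Fin 0)) :=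
        ⟨fun a b => PiLp.ext fun i => Fin.elim0 i⟩
      have hw0 : w = 0 := Subsingleton.elim w 0
      have hTsub : T ∩ (T + subdiffScaled ε D ψ z) = T := by
        rw [Set.inter_eq_left]
        intro x hx
        have hmem : x + w ∈ T + subdiffScaled ε D ψ z := Set.add_mem_add hx hwS
        simpa [hw0] using hmem
      rw [hTsub, hw0]
      simp
    · have himg : (fun y => y + w) '' T ⊆ T ∩ (T + subdiffScaled ε D ψ z) := by
        rintro x ⟨y, hy, rfl⟩
        exact ⟨hTadd y hy w hwT, Set.add_mem_add hy hwS⟩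
      have h1 : (∫ x in (fun y => y + w) '' T, Real.exp (-‖x‖ ^ 2 / 2))
          ≤ ∫ x in T ∩ (T + subdiffScaled ε D ψ z), Real.exp (-‖x‖ ^ 2 / 2) :=
        setIntegral_mono_set hint_one.integrableOn
          (Filter.Eventually.of_forall fun x => Real.exp_nonneg _)
          (HasSubset.Subset.eventuallyLE himg)
      have h2 : (∫ x in (fun y => y + w) '' T, Real.exp (-‖x‖ ^ 2 / 2))
          = ∫ y in T, Real.exp (-‖y + w‖ ^ 2 / 2) :=
        (measurePreserving_add_right volume w).setIntegral_image_emb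
          (MeasurableEquiv.addRight w).measurableEmbedding _ _
      have h3 := aux_core1 hn hTmeas hTsmul w
      rw [gauss_eq, gauss_eq]
      have key : Real.exp (-‖w‖ ^ 2 / 2 - ‖w‖ * Real.sqrt n) * ∫ x in T, Real.exp (-‖x‖ ^ 2 / 2)
          ≤ ∫ x in T ∩ (T + subdiffScaled ε D ψ z), Real.exp (-‖x‖ ^ 2 / 2) := by
        rw [hone_eq T]
        calc Real.exp (-‖w‖ ^ 2 / 2 - ‖w‖ * Real.sqrt n)
              * ∫ x in T, Real.exp (-(1 * ‖x‖ ^ 2) / 2)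
            ≤ ∫ y in T, Real.exp (-‖y + w‖ ^ 2 / 2) := h3
          _ = ∫ x in (fun y => y + w) '' T, Real.exp (-‖x‖ ^ 2 / 2) := h2.symm
          _ ≤ _ := h1
      calc (2 * Real.pi) ^ (-(n : ℝ) / 2) * (∫ x in T, Real.exp (-‖x‖ ^ 2 / 2))
            * Real.exp (-‖w‖ ^ 2 / 2 - ‖w‖ * Real.sqrt n)
          = (2 * Real.pi) ^ (-(n : ℝ) / 2)
            * (Real.exp (-‖w‖ ^ 2 / 2 - ‖w‖ * Real.sqrt n)
                * ∫ x in T, Real.exp (-‖x‖ ^ 2 / 2)) := by ring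
        _ ≤ (2 * Real.pi) ^ (-(n : ℝ) / 2)
            * ∫ x in T ∩ (T + subdiffScaled ε D ψ z), Real.exp (-‖x‖ ^ 2 / 2) :=
          mul_le_mul_of_nonneg_left key hc_pos.le
  · intro v _hgrad p hp hmin
    set u := ε • v with hu_def
    have h0T : (0 : EuclideanSpace ℝ (Fin n)) ∈ dualCone T := by
      intro x _hx
      simp [inner_zero_right]
    have hDist : infDist u (dualCone T) = ‖u - p‖ := by
      apply le_antisymm
      · simpa [dist_eq_norm] using infDist_le_dist_of_mem hp
      · by_contra hcon
        push_neg at hcon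
        obtain ⟨a, ha, hlt⟩ := (infDist_lt_iff ⟨0, h0T⟩).1 hcon
        have h4 := hmin a ha
        rw [dist_eq_norm u p] at h4
        linarith
    have hsmulD : ∀ t : ℝ, 0 ≤ t → (t • p) ∈ dualCone T := by
      intro t ht x hx
      rw [real_inner_smul_right]
      exact mul_nonneg ht (hp x hx)
    have horth : ⟪p, u - p⟫ = 0 := by
      have hkey : ∀ t : ℝ, 0 ≤ t →
          0 ≤ 2 * ((1 - t) * ⟪u - p, p⟫) + (1 - t) ^ 2 * ‖p‖ ^ 2 := by
        intro t ht
        have h1 := hmin (t • p) (hsmulD t ht)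
        have h2 : dist u p ^ 2 ≤ dist u (t • p) ^ 2 := pow_le_pow_left₀ dist_nonneg h1 2
        have h3 : u - t • p = (u - p) + (1 - t) • p := by
          rw [sub_smul, one_smul]
          abel
        rw [dist_eq_norm, dist_eq_norm, h3, norm_add_sq_real, real_inner_smul_right,
          norm_smul, Real.norm_eq_abs, mul_pow, sq_abs] at h2
        linarith
      set c := ⟪u - p, p⟫ with hc_def
      have hgoal : c = 0 := by
        have h2c : 0 ≤ 2 * c + ‖p‖ ^ 2 := by
          have := hkey 0 le_rfl
          simpa using this
        by_cases hP : ‖p‖ ^ 2 = 0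
        · have hp0 : p = 0 := by
            have : ‖p‖ = 0 := by
              have := sq_eq_zero_iff.1 hP
              exact this
            exact norm_eq_zero.1 this
          rw [hc_def, hp0, inner_zero_right]
        · have hPpos : 0 < ‖p‖ ^ 2 := lt_of_le_of_ne (sq_nonneg _) (Ne.symm hP)
          have ht0 : 0 ≤ 1 + c / ‖p‖ ^ 2 := by
            have hdiv : -(1 : ℝ) / 2 ≤ c / ‖p‖ ^ 2 := by
              rw [div_le_div_iff₀ (by norm_num) hPpos]
              linarith
            linarith
          have hineq := hkey (1 + c / ‖p‖ ^ 2) ht0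
          have h4 : (1 - (1 + c / ‖p‖ ^ 2)) = -(c / ‖p‖ ^ 2) := by ring
          rw [h4] at hineq
          have h5 : 2 * (-(c / ‖p‖ ^ 2) * c) + (-(c / ‖p‖ ^ 2)) ^ 2 * ‖p‖ ^ 2
              = -(c ^ 2 / ‖p‖ ^ 2) := by
            field_simp
            ring
          rw [h5] at hineq
          have h6 : c ^ 2 / ‖p‖ ^ 2 ≤ 0 := by linarith
          have h7 : c ^ 2 ≤ 0 := by
            by_contra hcon
            push_neg at hcon
            have : 0 < c ^ 2 / ‖p‖ ^ 2 := div_pos hcon hPpos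
            linarith
          nlinarith [sq_nonneg c]
      rw [real_inner_comm]
      exact hgoal
    rcases Nat.eq_zero_or_pos n with hn | hn
    · subst hn
      haveI : Subsingleton (EuclideanSpace ℝ (Fin 0)) :=
        ⟨fun a b => PiLp.ext fun i => Fin.elim0 i⟩
      have hp0 : p = 0 := Subsingleton.elim p 0
      have hu0 : u = 0 := Subsingleton.elim u 0
      have hmono : gauss (T ∩ ((· + u) '' T)) ≤ gauss T := by
        rw [gauss_eq, gauss_eq]
        apply mul_le_mul_of_nonneg_left _ hc_pos.le
        exact setIntegral_mono_set hint_one.integrableOn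
          (Filter.Eventually.of_forall fun x => Real.exp_nonneg _)
          (HasSubset.Subset.eventuallyLE inter_subset_left)
      have hexp1 : Real.exp (-‖p‖ ^ 2 / 2 + infDist u (dualCone T) * Real.sqrt (0 : ℕ)) = 1 := by
        rw [hp0]
        simp
      rw [hexp1, mul_one]
      exact hmono
    · have himg : T ∩ ((· + u) '' T) = (· + u) '' (T ∩ ((· + u) ⁻¹' T)) := by
        ext x
        constructor
        · rintro ⟨hxT, y, hyT, rfl⟩
          exact ⟨y, ⟨hyT, hxT⟩, rfl⟩
        · rintro ⟨y, ⟨hyT, hyu⟩, rfl⟩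
          exact ⟨hyu, y, hyT, rfl⟩
      rw [gauss_eq, gauss_eq, himg]
      have h2 : (∫ x in (· + u) '' (T ∩ ((· + u) ⁻¹' T)), Real.exp (-‖x‖ ^ 2 / 2))
          = ∫ y in T ∩ ((· + u) ⁻¹' T), Real.exp (-‖y + u‖ ^ 2 / 2) :=
        (measurePreserving_add_right volume u).setIntegral_image_emb
          (MeasurableEquiv.addRight u).measurableEmbedding _ _
      rw [h2, hDist]
      have h3 := aux_core2 hn hTmeas hTsmul u p hp horth
      rw [← hone_eq T] at h3
      calc (2 * Real.pi) ^ (-(n : ℝ) / 2)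
            * ∫ y in T ∩ ((· + u) ⁻¹' T), Real.exp (-‖y + u‖ ^ 2 / 2)
          ≤ (2 * Real.pi) ^ (-(n : ℝ) / 2)
            * (Real.exp (-‖p‖ ^ 2 / 2 + ‖u - p‖ * Real.sqrt n)
                * ∫ x in T, Real.exp (-‖x‖ ^ 2 / 2)) :=
          mul_le_mul_of_nonneg_left h3 hc_pos.le
        _ = (2 * Real.pi) ^ (-(n : ℝ) / 2) * (∫ x in T, Real.exp (-‖x‖ ^ 2 / 2))
            * Real.exp (-‖p‖ ^ 2 / 2 + ‖u - p‖ * Real.sqrt n) := by ring
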